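/- arXiv:2103.13688 — 3 statements merged into one kernel-verified Lean document; each statement's English description precedes it below -/
import Mathlib

section
/- With notation as above (transitivity of Brauer maps): for a p-permutation G-algebra A and p-subgroups Q ⊴ S ≤ G, the Brauer homomorphism Br_S : A^S → A(S) factors as Br_S = Br_S^{A(Q)} ∘ Br_Q, where Br_Q : A^S → A(Q)^S and Br_S^{A(Q)} : A(Q)^S → A(Q)(S) ≅ A(S). -/
namespace PPerm
open scoped Classical


def IsPrimIdemSet {B : Type*} [Ring B] (S : Set B) (e : B) : Prop :=
  e ∈ S ∧ IsIdempotentElem e ∧ e ≠ 0 ∧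
    ∀ a b : B, a ∈ S → b ∈ S → IsIdempotentElem a → IsIdempotentElem b →
      a * b = 0 → b * a = 0 → e = a + b → a = 0 ∨ b = 0

def IsBlock {B : Type*} [Ring B] (e : B) : Prop := IsPrimIdemSet (Set.center B) e

variable {G : Type*} [Group G]

/-- A transversal (set of left coset representatives) of `H` in `K`. -/
def IsTransversal (H K : Subgroup G) (S : Finset G) : Prop :=
  (↑S : Set G) ⊆ ↑K ∧ ∀ y ∈ K, ∃! x, x ∈ S ∧ x⁻¹ * y ∈ H

/-- A transversal of the double cosets `NxR` in `G`. -/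
def IsDCTransversal (N R : Subgroup G) (D : Finset G) : Prop :=
  ∀ g : G, ∃! x, x ∈ D ∧ ∃ n ∈ N, ∃ r ∈ R, g = n * x * r

/-- The conjugate subgroup `R^g = g⁻¹ R g`. -/
def conjSub (g : G) (R : Subgroup G) : Subgroup G :=
  R.map (MulAut.conj g⁻¹).toMonoidHom

variable (A : Type*) [Ring A] [MulSemiringAction G A]

/-- The fixed-point subring `A^Q`. -/
def fixedSubring (Q : Subgroup G) : Subring A where
  carrier := {a | ∀ q ∈ Q, q • a = a}
  mul_mem' := by intro a b ha hb; intro q hq; rw [smul_mul', ha q hq, hb q hq]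
  one_mem' := by intro q hq; exact smul_one q
  add_mem' := by intro a b ha hb; intro q hq; rw [smul_add, ha q hq, hb q hq]
  zero_mem' := by intro q hq; exact smul_zero q
  neg_mem' := by intro a ha; intro q hq; rw [smul_neg, ha q hq]

/-- The relative trace ideal `V_H^K = Tr_H^K(V ∩ A^H)`, described via transversals. -/
def trSetIn (V : Set A) (H K : Subgroup G) : Set A :=
  {b | ∃ (a : A) (S : Finset G), a ∈ V ∧ (∀ h ∈ H, h • a = a) ∧ IsTransversal H K S ∧
    b = ∑ x ∈ S, x • a}

/-- The relative trace ideal `A_H^K = Tr_H^K(A^H)`. -/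
def trSet (H K : Subgroup G) : Set A := trSetIn A Set.univ H K

/-- `Q` is a defect group of `c` relative to `K`, with traces taken inside `V`. -/
def IsDefectIn (V : Set A) (c : A) (Q K : Subgroup G) : Prop :=
  Q ≤ K ∧ c ∈ trSetIn A V Q K ∧
    ∀ Q' : Subgroup G, Q' ≤ Q → c ∈ trSetIn A V Q' K → Q' = Q

/-- `Q` is a defect group of `c` in `K`. -/
def IsDefect (c : A) (Q K : Subgroup G) : Prop := IsDefectIn A Set.univ c Q K

/-- The congruence defining the Brauer quotient `A(Q) = A^Q / Σ_{R<Q} A_R^Q`. -/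
def brCon (Q : Subgroup G) : RingCon (fixedSubring A Q) :=
  ringConGen (fun a b => ∃ R : Subgroup G, R < Q ∧ ((a : A) - b) ∈ trSet A R Q)

/-- The Brauer quotient `A(Q)`. -/
abbrev BrQuot (Q : Subgroup G) := (brCon A Q).Quotient

/-- The Brauer homomorphism `Br_Q : A^Q → A(Q)` (with junk value `0` off `A^Q`). -/
noncomputable def brA (Q : Subgroup G) (a : A) : BrQuot A Q :=
  if h : a ∈ fixedSubring A Q then (brCon A Q).mk' ⟨a, h⟩ else 0

/-- `x ∈ A(Q)` is fixed by the (conjugation) action of `n`. -/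
def fixesQuot (Q : Subgroup G) (n : G) (x : BrQuot A Q) : Prop :=
  ∀ a : A, a ∈ fixedSubring A Q → brA A Q a = x → brA A Q (n • a) = x

/-- The `T`-fixed points `A(Q)^T` of the Brauer quotient. -/
def quotFixed (Q T : Subgroup G) : Set (BrQuot A Q) := {x | ∀ n ∈ T, fixesQuot A Q n x}

/-- `(Q, e)` is an `(A, c, G)`-Brauer pair. -/
def IsBPair (c : A) (Q : Subgroup G) (e : BrQuot A Q) : Prop :=
  IsBlock e ∧ brA A Q c * e ≠ 0

/-- The Broué–Puig containment order on Brauer pairs. -/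
def pairLE (S T : Subgroup G) (fS : BrQuot A S) (fT : BrQuot A T) : Prop :=
  S ≤ T ∧ ∀ i : A, IsPrimIdemSet (fixedSubring A T : Set A) i →
    brA A T i * fT ≠ 0 → brA A S i * fS ≠ 0

/-- `(S, fS)` is an `(A(Q), fQ, H)`-Brauer pair, expressed via lifts along `Br_Q`,
using the canonical identification `A(Q)(S) ≅ A(S)`. -/
def IsBPair₂ (Q : Subgroup G) (fQ : BrQuot A Q) (S : Subgroup G) (fS : BrQuot A S) : Prop :=
  IsBlock fS ∧ ∃ a : A, a ∈ fixedSubring A S ∧ brA A Q a = fQ ∧ brA A S a * fS ≠ 0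

/-- The Broué–Puig order on Brauer pairs of the algebra `A(Q)`, expressed via lifts. -/
def pairLE₂ (Q S T : Subgroup G) (fS : BrQuot A S) (fT : BrQuot A T) : Prop :=
  S ≤ T ∧ ∀ j : BrQuot A Q, IsPrimIdemSet (quotFixed A Q T) j →
    (∃ a : A, a ∈ fixedSubring A T ∧ brA A Q a = j ∧ brA A T a * fT ≠ 0) →
    (∃ a : A, a ∈ fixedSubring A S ∧ brA A Q a = j ∧ brA A S a * fS ≠ 0)

/-- conjugation of `a` by a unit of the subset `V`. -/
def IsConjBy (V : Set A) (a b : A) : Prop :=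
  ∃ u v : A, u ∈ V ∧ v ∈ V ∧ u * v = 1 ∧ v * u = 1 ∧ b = u * a * v

/-- `A` is a `p`-permutation `G`-algebra: it has a `G`-stable `k`-basis. -/
def IsPPermAlgebra (k : Type*) [CommSemiring k] [Module k A] : Prop :=
  ∃ s : Set A, (∀ g : G, ∀ x ∈ s, g • x ∈ s) ∧
    LinearIndependent k ((↑) : s → A) ∧ Submodule.span k s = ⊤


section Helpers

variable {p : ℕ} {k G A : Type*} [Fact p.Prime] [Field k] [CharP k p] [Group G] [Fintype G]
    [Ring A] [Algebra k A] [MulSemiringAction G A] [SMulCommClass G k A]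

lemma mem_fixedSubring {P : Subgroup G} {a : A} :
    a ∈ fixedSubring A P ↔ ∀ q ∈ P, q • a = a := Iff.rfl

/-- Existence of transversals. -/
lemma exists_transversal (H K : Subgroup G) : ∃ T : Finset G, IsTransversal H K T := by
  classical
  refine ⟨Finset.image (fun c : K ⧸ H.subgroupOf K => ((Quotient.out c : K) : G))
    Finset.univ, ?_, ?_⟩
  · intro x hx
    simp only [Finset.coe_image, Set.mem_image] at hx
    obtain ⟨c, -, rfl⟩ := hx
    exact (Quotient.out c).2
  · intro y hy
    refine ⟨((Quotient.out (QuotientGroup.mk (⟨y, hy⟩ : K) : K ⧸ H.subgroupOf K) : K) : G),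
      ⟨⟨?_, ?_⟩, ?_⟩⟩
    · exact Finset.mem_image_of_mem _ (Finset.mem_univ _)
    · have h1 : (QuotientGroup.mk (Quotient.out (QuotientGroup.mk (⟨y, hy⟩ : K) :
          K ⧸ H.subgroupOf K)) : K ⧸ H.subgroupOf K) = QuotientGroup.mk (⟨y, hy⟩ : K) :=
        Quotient.out_eq' _
      have h2 := QuotientGroup.eq.mp h1
      rw [Subgroup.mem_subgroupOf] at h2
      simpa using h2
    · rintro x ⟨hxT, hxH⟩
      simp only [Finset.mem_image, Finset.mem_univ, true_and] at hxT
      obtain ⟨c, rfl⟩ := hxT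
      have hc : c = QuotientGroup.mk (⟨y, hy⟩ : K) := by
        rw [← Quotient.out_eq' c]
        rw [QuotientGroup.eq, Subgroup.mem_subgroupOf]
        simpa using hxH
      rw [hc]

lemma IsTransversal.unique' {H K : Subgroup G} {T : Finset G} (hT : IsTransversal H K T)
    {x x' y : G} (hy : y ∈ K) (hx : x ∈ T) (hx' : x' ∈ T) (h1 : x⁻¹ * y ∈ H)
    (h2 : x'⁻¹ * y ∈ H) : x = x' := by
  obtain ⟨z, -, hz⟩ := hT.2 y hy
  rw [hz x ⟨hx, h1⟩, hz x' ⟨hx', h2⟩]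

lemma IsTransversal.mem_of_mem {H K : Subgroup G} {T : Finset G} (hT : IsTransversal H K T)
    {x : G} (hx : x ∈ T) : x ∈ K := hT.1 (Finset.mem_coe.mpr hx)

lemma IsTransversal.cast_card_eq_zero {H K : Subgroup G} {T : Finset G}
    (hT : IsTransversal H K T) (hK : IsPGroup p (↥K)) (hHK : H < K) : ((T.card : k)) = 0 := by
  classical
  have hcard : T.card = (H.subgroupOf K).index := by
    rw [Subgroup.index_eq_card, ← Nat.card_eq_finsetCard]
    refine Nat.card_congr (Equiv.ofBijective
      (fun x : ↥T => (QuotientGroup.mk (⟨(x : G), hT.mem_of_mem x.2⟩ : K) : K ⧸ H.subgroupOf K))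
      ⟨?_, ?_⟩)
    · rintro ⟨x, hx⟩ ⟨y, hy⟩ hxy
      have h2 := QuotientGroup.eq.mp hxy
      rw [Subgroup.mem_subgroupOf] at h2
      refine Subtype.ext (hT.unique' (hT.mem_of_mem hy) hx hy (by simpa using h2) ?_)
      rw [inv_mul_cancel]; exact H.one_mem
    · intro c
      obtain ⟨y, rfl⟩ : ∃ y : K, (QuotientGroup.mk y : K ⧸ H.subgroupOf K) = c :=
        ⟨Quotient.out c, Quotient.out_eq' c⟩
      obtain ⟨x, ⟨hxT, hxH⟩, -⟩ := hT.2 (y : G) y.2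
      refine ⟨⟨x, hxT⟩, ?_⟩
      rw [QuotientGroup.eq, Subgroup.mem_subgroupOf]
      simpa using hxH
  obtain ⟨n, hn⟩ := hK.index (H.subgroupOf K)
  have hn0 : n ≠ 0 := by
    rintro rfl
    rw [pow_zero, Subgroup.index_eq_one, Subgroup.subgroupOf_eq_top] at hn
    exact hHK.ne (le_antisymm hHK.le hn)
  rw [hcard, hn, Nat.cast_pow, CharP.cast_eq_zero k p, zero_pow hn0]

lemma smul_transversal_sum {R P : Subgroup G} {a : A} (ha : ∀ h ∈ R, h • a = a)
    {T : Finset G} (hT : IsTransversal R P T) {q : G} (hq : q ∈ P) :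
    q • ∑ x ∈ T, x • a = ∑ x ∈ T, x • a := by
  classical
  rw [Finset.smul_sum]
  have rep : ∀ y, y ∈ P → ∃ x, x ∈ T ∧ x⁻¹ * y ∈ R := fun y hy => (hT.2 y hy).exists
  refine Finset.sum_bij'
    (i := fun x hx => Classical.choose (rep (q * x) (P.mul_mem hq (hT.mem_of_mem hx))))
    (j := fun x hx => Classical.choose (rep (q⁻¹ * x) (P.mul_mem (P.inv_mem hq) (hT.mem_of_mem hx))))
    ?_ ?_ ?_ ?_ ?_
  · intro x hx
    exact (Classical.choose_spec (rep (q * x) (P.mul_mem hq (hT.mem_of_mem hx)))).1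
  · intro x hx
    exact (Classical.choose_spec (rep (q⁻¹ * x) (P.mul_mem (P.inv_mem hq) (hT.mem_of_mem hx)))).1
  · intro x hx
    set i := Classical.choose (rep (q * x) (P.mul_mem hq (hT.mem_of_mem hx))) with hidef
    obtain ⟨hiT, hiR⟩ := Classical.choose_spec (rep (q * x) (P.mul_mem hq (hT.mem_of_mem hx)))
    set j := Classical.choose (rep (q⁻¹ * i) (P.mul_mem (P.inv_mem hq) (hT.mem_of_mem hiT)))
      with hjdef
    obtain ⟨hjT, hjR⟩ := Classical.choose_spec
      (rep (q⁻¹ * i) (P.mul_mem (P.inv_mem hq) (hT.mem_of_mem hiT)))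
    have hxm : x⁻¹ * (q⁻¹ * i) ∈ R := by
      have heq : x⁻¹ * (q⁻¹ * i) = (i⁻¹ * (q * x))⁻¹ := by group
      rw [heq]; exact R.inv_mem hiR
    exact hT.unique' (P.mul_mem (P.inv_mem hq) (hT.mem_of_mem hiT)) hjT hx hjR hxm
  · intro x hx
    set j := Classical.choose (rep (q⁻¹ * x) (P.mul_mem (P.inv_mem hq) (hT.mem_of_mem hx)))
      with hjdef
    obtain ⟨hjT, hjR⟩ := Classical.choose_spec
      (rep (q⁻¹ * x) (P.mul_mem (P.inv_mem hq) (hT.mem_of_mem hx)))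
    set i := Classical.choose (rep (q * j) (P.mul_mem hq (hT.mem_of_mem hjT))) with hidef
    obtain ⟨hiT, hiR⟩ := Classical.choose_spec (rep (q * j) (P.mul_mem hq (hT.mem_of_mem hjT)))
    have hxm : x⁻¹ * (q * j) ∈ R := by
      have heq : x⁻¹ * (q * j) = (j⁻¹ * (q⁻¹ * x))⁻¹ := by group
      rw [heq]; exact R.inv_mem hjR
    exact hT.unique' (P.mul_mem hq (hT.mem_of_mem hjT)) hiT hx hiR hxm
  · intro x hx
    set i := Classical.choose (rep (q * x) (P.mul_mem hq (hT.mem_of_mem hx))) with hidef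
    obtain ⟨hiT, hiR⟩ := Classical.choose_spec (rep (q * x) (P.mul_mem hq (hT.mem_of_mem hx)))
    calc q • x • a = (q * x) • a := (mul_smul q x a).symm
      _ = (i * (i⁻¹ * (q * x))) • a := by rw [mul_inv_cancel_left]
      _ = i • (i⁻¹ * (q * x)) • a := mul_smul _ _ _
      _ = i • a := by rw [ha _ hiR]

lemma trSet_mem_fixed {R P : Subgroup G} {t : A} (ht : t ∈ trSet A R P) :
    t ∈ fixedSubring A P := by
  obtain ⟨a, T, -, ha, hT, rfl⟩ := ht
  intro q hq
  exact smul_transversal_sum ha hT hq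

lemma mul_mem_trSet_left {R P : Subgroup G} (hRP : R ≤ P) {c t : A}
    (hc : c ∈ fixedSubring A P) (ht : t ∈ trSet A R P) : c * t ∈ trSet A R P := by
  obtain ⟨a, T, -, ha, hT, rfl⟩ := ht
  refine ⟨c * a, T, trivial, ?_, hT, ?_⟩
  · intro h hh; rw [smul_mul', hc h (hRP hh), ha h hh]
  · rw [Finset.mul_sum]
    refine Finset.sum_congr rfl fun x hx => ?_
    rw [smul_mul', hc x (hT.mem_of_mem hx)]

lemma mul_mem_trSet_right {R P : Subgroup G} (hRP : R ≤ P) {c t : A}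
    (hc : c ∈ fixedSubring A P) (ht : t ∈ trSet A R P) : t * c ∈ trSet A R P := by
  obtain ⟨a, T, -, ha, hT, rfl⟩ := ht
  refine ⟨a * c, T, trivial, ?_, hT, ?_⟩
  · intro h hh; rw [smul_mul', hc h (hRP hh), ha h hh]
  · rw [Finset.sum_mul]
    refine Finset.sum_congr rfl fun x hx => ?_
    rw [smul_mul', hc x (hT.mem_of_mem hx)]

end Helpers
/-- The ideal `Σ_{R<P} A_R^P` of `A^P`, as an additive subgroup of `A`. -/
def brKer {G : Type*} [Group G] (A : Type*) [Ring A] [MulSemiringAction G A]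
    (P : Subgroup G) : AddSubgroup A :=
  AddSubgroup.closure {t | ∃ R : Subgroup G, R < P ∧ t ∈ trSet A R P}

section Helpers2

variable {p : ℕ} {k G A : Type*} [Fact p.Prime] [Field k] [CharP k p] [Group G] [Fintype G]
    [Ring A] [Algebra k A] [MulSemiringAction G A] [SMulCommClass G k A]

lemma brKer_mem_fixed {P : Subgroup G} {t : A} (ht : t ∈ brKer A P) :
    t ∈ fixedSubring A P := by
  induction ht using AddSubgroup.closure_induction with
  | mem t' ht' => obtain ⟨R, hR, htr⟩ := ht'; exact trSet_mem_fixed htr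
  | zero => exact zero_mem _
  | add x y hx hy ihx ihy => exact add_mem ihx ihy
  | neg x hx ihx => exact neg_mem ihx

lemma mul_mem_brKer_left {P : Subgroup G} {c t : A} (hc : c ∈ fixedSubring A P)
    (ht : t ∈ brKer A P) : c * t ∈ brKer A P := by
  induction ht using AddSubgroup.closure_induction with
  | mem t' ht' =>
      obtain ⟨R, hR, htr⟩ := ht'
      exact AddSubgroup.subset_closure ⟨R, hR, mul_mem_trSet_left hR.le hc htr⟩
  | zero => rw [mul_zero]; exact zero_mem _
  | add x y hx hy ihx ihy => rw [mul_add]; exact add_mem ihx ihy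
  | neg x hx ihx => rw [mul_neg]; exact neg_mem ihx

lemma mul_mem_brKer_right {P : Subgroup G} {c t : A} (hc : c ∈ fixedSubring A P)
    (ht : t ∈ brKer A P) : t * c ∈ brKer A P := by
  induction ht using AddSubgroup.closure_induction with
  | mem t' ht' =>
      obtain ⟨R, hR, htr⟩ := ht'
      exact AddSubgroup.subset_closure ⟨R, hR, mul_mem_trSet_right hR.le hc htr⟩
  | zero => rw [zero_mul]; exact zero_mem _
  | add x y hx hy ihx ihy => rw [add_mul]; exact add_mem ihx ihy
  | neg x hx ihx => rw [neg_mul]; exact neg_mem ihx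

lemma brCon_iff {P : Subgroup G} (x y : fixedSubring A P) :
    brCon A P x y ↔ (x : A) - y ∈ brKer A P := by
  constructor
  · intro h
    let cExp : RingCon (fixedSubring A P) :=
      { r := fun u v => (u : A) - (v : A) ∈ brKer A P
        iseqv := ⟨fun u => by simp [sub_self, zero_mem],
          fun {u v} h => by
            have : ((v : A) - u) = -((u : A) - v) := by noncomm_ring
            rw [this]; exact neg_mem h,
          fun {u v w} h1 h2 => by
            have : ((u : A) - w) = ((u : A) - v) + ((v : A) - w) := by noncomm_ring
            rw [this]; exact add_mem h1 h2⟩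
        add' := fun {u v w z} h1 h2 => by
          have : ((↑(u + w) : A) - ↑(v + z)) = ((u : A) - v) + ((w : A) - z) := by
            push_cast; noncomm_ring
          show (↑(u + w) : A) - ↑(v + z) ∈ brKer A P
          rw [this]; exact add_mem h1 h2
        mul' := fun {u v w z} h1 h2 => by
          have : ((↑(u * w) : A) - ↑(v * z)) = (u : A) * ((w : A) - z) + ((u : A) - v) * z := by
            push_cast; noncomm_ring
          show (↑(u * w) : A) - ↑(v * z) ∈ brKer A P
          rw [this]
          exact add_mem (mul_mem_brKer_left u.2 h2) (mul_mem_brKer_right z.2 h1) }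
    exact (RingCon.ringConGen_le (c := cExp)).mpr
      (fun u v huv => by
        obtain ⟨R, hR, hm⟩ := huv
        show (u : A) - v ∈ brKer A P
        exact AddSubgroup.subset_closure ⟨R, hR, hm⟩)
      h
  · intro h
    have key : ∀ t, t ∈ brKer A P → ∀ htf : t ∈ fixedSubring A P,
        brCon A P ⟨t, htf⟩ 0 := by
      intro t ht
      induction ht using AddSubgroup.closure_induction with
      | mem t' ht' =>
          intro htf
          obtain ⟨R, hR, htr⟩ := ht'
          exact RingConGen.Rel.of _ _ ⟨R, hR, by simpa using htr⟩
      | zero =>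
          intro htf
          have h0 : (⟨(0 : A), htf⟩ : fixedSubring A P) = 0 := Subtype.ext rfl
          rw [h0]
          exact (brCon A P).refl 0
      | add u v hu hv ihu ihv =>
          intro htf
          have hu' := brKer_mem_fixed hu
          have hv' := brKer_mem_fixed hv
          have := (brCon A P).add (ihu hu') (ihv hv')
          have he : (⟨u + v, htf⟩ : fixedSubring A P) = ⟨u, hu'⟩ + ⟨v, hv'⟩ := Subtype.ext rfl
          rw [he]
          simpa using this
      | neg u hu ihu =>
          intro htf
          have hu' := brKer_mem_fixed hu
          have := (brCon A P).neg (ihu hu')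
          have he : (⟨-u, htf⟩ : fixedSubring A P) = -⟨u, hu'⟩ := Subtype.ext rfl
          rw [he]
          simpa using this
    have htf : (x : A) - y ∈ fixedSubring A P := sub_mem x.2 y.2
    have h1 := key _ h htf
    have he : (⟨(x : A) - y, htf⟩ : fixedSubring A P) = x - y := Subtype.ext rfl
    rw [he] at h1
    have h2 := (brCon A P).add h1 ((brCon A P).refl y)
    simpa using h2

lemma brA_apply {P : Subgroup G} {a : A} (ha : a ∈ fixedSubring A P) :
    brA A P a = (brCon A P).mk' ⟨a, ha⟩ := dif_pos ha

lemma brA_mk'_eq_iff {P : Subgroup G} (u v : fixedSubring A P) :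
    (brCon A P).mk' u = (brCon A P).mk' v ↔ brCon A P u v := by
  show ((u : (brCon A P).Quotient) = (v : (brCon A P).Quotient)) ↔ _
  exact RingCon.eq _

lemma brA_add {P : Subgroup G} {a b : A} (ha : a ∈ fixedSubring A P)
    (hb : b ∈ fixedSubring A P) : brA A P (a + b) = brA A P a + brA A P b := by
  rw [brA_apply (add_mem ha hb), brA_apply ha, brA_apply hb, ← map_add]
  congr 1

lemma brA_mul {P : Subgroup G} {a b : A} (ha : a ∈ fixedSubring A P)
    (hb : b ∈ fixedSubring A P) : brA A P (a * b) = brA A P a * brA A P b := by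
  rw [brA_apply (mul_mem ha hb), brA_apply ha, brA_apply hb, ← map_mul]
  congr 1

lemma brA_zero (P : Subgroup G) : brA A P (0 : A) = 0 := by
  rw [brA_apply (zero_mem _)]
  have : (⟨(0 : A), zero_mem _⟩ : fixedSubring A P) = 0 := Subtype.ext rfl
  rw [this, map_zero]

lemma brA_one (P : Subgroup G) : brA A P (1 : A) = 1 := by
  rw [brA_apply (one_mem _)]
  have : (⟨(1 : A), one_mem _⟩ : fixedSubring A P) = 1 := Subtype.ext rfl
  rw [this, map_one]

lemma brA_sub {P : Subgroup G} {a b : A} (ha : a ∈ fixedSubring A P)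
    (hb : b ∈ fixedSubring A P) : brA A P (a - b) = brA A P a - brA A P b := by
  rw [brA_apply (sub_mem ha hb), brA_apply ha, brA_apply hb, ← map_sub]
  congr 1

lemma brA_eq_zero_iff {P : Subgroup G} {a : A} (ha : a ∈ fixedSubring A P) :
    brA A P a = 0 ↔ a ∈ brKer A P := by
  rw [brA_apply ha]
  have h0 : (0 : BrQuot A P) = (brCon A P).mk' 0 := (map_zero _).symm
  rw [h0, brA_mk'_eq_iff, brCon_iff]
  simp

lemma brA_eq_iff {P : Subgroup G} {a b : A} (ha : a ∈ fixedSubring A P)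
    (hb : b ∈ fixedSubring A P) :
    brA A P a = brA A P b ↔ a - b ∈ brKer A P := by
  rw [← sub_eq_zero, ← brA_sub ha hb, brA_eq_zero_iff (sub_mem ha hb)]

lemma brA_surjective (P : Subgroup G) (z : BrQuot A P) :
    ∃ a : A, a ∈ fixedSubring A P ∧ brA A P a = z := by
  obtain ⟨u, hu⟩ := Quot.exists_rep z
  exact ⟨u.1, u.2, by rw [brA_apply u.2]; exact hu⟩

end Helpers2
section Helpers3

variable {p : ℕ} {k G A : Type*} [Fact p.Prime] [Field k] [CharP k p] [Group G] [Fintype G]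
    [Ring A] [Algebra k A] [MulSemiringAction G A] [SMulCommClass G k A]

variable {s : Set A}

lemma repr_smul_apply (hstab : ∀ g : G, ∀ x ∈ s, g • x ∈ s) (b : Module.Basis s k A)
    (hb : ∀ x : s, (b x : A) = x) (g : G) (a : A) (x : s) :
    b.repr (g • a) x = b.repr a ⟨g⁻¹ • (x : A), hstab g⁻¹ x x.2⟩ := by
  classical
  let L : A →ₗ[k] A := DistribMulAction.toLinearMap k A g
  let f1 : A →ₗ[k] k := (Finsupp.lapply x) ∘ₗ (b.repr : A →ₗ[k] (s →₀ k)) ∘ₗ L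
  let f2 : A →ₗ[k] k :=
    (Finsupp.lapply (⟨g⁻¹ • (x : A), hstab g⁻¹ x x.2⟩ : s)) ∘ₗ (b.repr : A →ₗ[k] (s →₀ k))
  have hf : f1 = f2 := by
    apply b.ext
    intro i
    have hgi : g • (i : A) ∈ s := hstab g i i.2
    have hiff : ((⟨g • (i : A), hgi⟩ : s) = x) ↔ (i = ⟨g⁻¹ • (x : A), hstab g⁻¹ x x.2⟩) := by
      rw [Subtype.ext_iff, Subtype.ext_iff]
      exact smul_eq_iff_eq_inv_smul g
    calc f1 (b i) = b.repr (g • (b i)) x := rfl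
      _ = b.repr (b ⟨g • (i : A), hgi⟩) x := by
          have hgb : g • (i : A) = b ⟨g • (i : A), hgi⟩ := (hb ⟨g • (i : A), hgi⟩).symm
          conv_lhs => rw [hb i, hgb]
      _ = (Finsupp.single (⟨g • (i : A), hgi⟩ : s) (1 : k)) x := by rw [b.repr_self]
      _ = if (⟨g • (i : A), hgi⟩ : s) = x then (1 : k) else 0 := Finsupp.single_apply
      _ = if i = (⟨g⁻¹ • (x : A), hstab g⁻¹ x x.2⟩ : s) then (1 : k) else 0 :=
          if_congr hiff rfl rfl
      _ = (Finsupp.single i (1 : k)) (⟨g⁻¹ • (x : A), hstab g⁻¹ x x.2⟩ : s) :=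
          Finsupp.single_apply.symm
      _ = b.repr (b i) (⟨g⁻¹ • (x : A), hstab g⁻¹ x x.2⟩ : s) := by rw [b.repr_self]
      _ = f2 (b i) := rfl
  exact DFunLike.congr_fun hf a

lemma trSet_repr_eq_zero (hstab : ∀ g : G, ∀ x ∈ s, g • x ∈ s) (b : Module.Basis s k A)
    (hb : ∀ x : s, (b x : A) = x) {P R : Subgroup G} (hP : IsPGroup p (↥P)) (hR : R < P)
    {t : A} (ht : t ∈ trSet A R P) {z : s} (hz : ∀ g ∈ P, g • (z : A) = z) :
    b.repr t z = 0 := by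
  obtain ⟨a, T, -, ha, hT, rfl⟩ := ht
  have h1 : b.repr (∑ x ∈ T, x • a) z = ∑ x ∈ T, b.repr (x • a) z := by
    rw [map_sum]; exact Finsupp.finset_sum_apply _ _ _
  have h2 : ∀ x ∈ T, b.repr (x • a) z = b.repr a z := by
    intro x hx
    rw [repr_smul_apply hstab b hb]
    congr 1
    apply Subtype.ext
    show x⁻¹ • (z : A) = z
    exact hz x⁻¹ (P.inv_mem (hT.mem_of_mem hx))
  rw [h1, Finset.sum_congr rfl h2, Finset.sum_const, nsmul_eq_mul,
    IsTransversal.cast_card_eq_zero hT hP hR, zero_mul]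

lemma brKer_repr_eq_zero (hstab : ∀ g : G, ∀ x ∈ s, g • x ∈ s) (b : Module.Basis s k A)
    (hb : ∀ x : s, (b x : A) = x) {P : Subgroup G} (hP : IsPGroup p (↥P))
    {a : A} (h : a ∈ brKer A P) {z : s} (hz : ∀ g ∈ P, g • (z : A) = z) :
    b.repr a z = 0 := by
  induction h using AddSubgroup.closure_induction with
  | mem t' ht' =>
      obtain ⟨R, hRlt, htr⟩ := ht'
      exact trSet_repr_eq_zero hstab b hb hP hRlt htr hz
  | zero => simp
  | add x y hx hy ihx ihy => rw [map_add, Finsupp.add_apply, ihx, ihy, add_zero]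
  | neg x hx ihx => rw [map_neg, Finsupp.neg_apply, ihx, neg_zero]

lemma mem_brKer_of_repr (hstab : ∀ g : G, ∀ x ∈ s, g • x ∈ s) (b : Module.Basis s k A)
    (hb : ∀ x : s, (b x : A) = x) {P : Subgroup G} (hP : IsPGroup p (↥P)) {a : A}
    (hfix : a ∈ fixedSubring A P)
    (hv : ∀ z : s, (∀ g ∈ P, g • (z : A) = z) → b.repr a z = 0) : a ∈ brKer A P := by
  classical
  suffices H : ∀ n : ℕ, ∀ a : A, a ∈ fixedSubring A P →
      (∀ z : s, (∀ g ∈ P, g • (z : A) = z) → b.repr a z = 0) →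
      (b.repr a).support.card ≤ n → a ∈ brKer A P by
    exact H _ a hfix hv le_rfl
  intro n
  induction n with
  | zero =>
      intro a _ _ hcard
      have h1 : (b.repr a).support = ∅ := Finset.card_eq_zero.mp (Nat.le_zero.mp hcard)
      have h2 : a = 0 := by
        have h3 : b.repr a = 0 := Finsupp.support_eq_empty.mp h1
        simpa using b.repr.map_eq_zero_iff.mp h3
      rw [h2]; exact zero_mem _
  | succ n ih =>
      intro a hfix hv hcard
      by_cases h0 : (b.repr a).support = ∅
      · have h2 : a = 0 := by
          have h3 : b.repr a = 0 := Finsupp.support_eq_empty.mp h0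
          simpa using b.repr.map_eq_zero_iff.mp h3
        rw [h2]; exact zero_mem _
      obtain ⟨x₀, hx₀⟩ := Finset.nonempty_iff_ne_empty.mpr h0
      set c₀ := b.repr a x₀ with hc₀def
      have hc₀ne : c₀ ≠ 0 := Finsupp.mem_support_iff.mp hx₀
      have hx₀nf : ¬ (∀ g ∈ P, g • (x₀ : A) = x₀) := fun h => hc₀ne (hv x₀ h)
      set H' : Subgroup G := MulAction.stabilizer G (x₀ : A) ⊓ P with hH'def
      have hH'le : H' ≤ P := inf_le_right
      have hH'lt : H' < P := lt_of_le_of_ne hH'le (by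
        intro he
        apply hx₀nf
        intro g hg
        have hgH : g ∈ H' := he ▸ hg
        exact hgH.1)
      obtain ⟨T, hT⟩ := exists_transversal H' P
      set t : A := ∑ x ∈ T, x • (c₀ • (x₀ : A)) with htdef
      have hfixt : ∀ h ∈ H', h • (c₀ • (x₀ : A)) = c₀ • (x₀ : A) := by
        intro h hh
        rw [smul_comm]
        rw [show h • (x₀ : A) = x₀ from hh.1]
      have htTr : t ∈ trSet A H' P := ⟨c₀ • (x₀ : A), T, trivial, hfixt, hT, rfl⟩
      have htK : t ∈ brKer A P := AddSubgroup.subset_closure ⟨H', hH'lt, htTr⟩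
      -- coordinates of t
      have hterm : ∀ z : s, ∀ x ∈ T, b.repr (x • (c₀ • (x₀ : A))) z =
          if x • (x₀ : A) = (z : A) then c₀ else 0 := by
        intro z x hx
        rw [repr_smul_apply hstab b hb, map_smul, Finsupp.smul_apply]
        have hrx : b.repr ((x₀ : A)) = Finsupp.single x₀ 1 := by rw [← hb x₀, b.repr_self]
        rw [hrx, Finsupp.single_apply]
        have hiff : (x₀ = (⟨x⁻¹ • (z : A), hstab x⁻¹ z z.2⟩ : s)) ↔ (x • (x₀ : A) = (z : A)) := by
          rw [Subtype.ext_iff]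
          exact eq_inv_smul_iff
        rw [if_congr hiff rfl rfl]
        simp [smul_eq_mul]
      have huniq : ∀ x ∈ T, ∀ x' ∈ T, x • (x₀ : A) = x' • (x₀ : A) → x = x' := by
        intro x hx x' hx' he
        have hmem : x'⁻¹ * x ∈ H' := by
          constructor
          · show (x'⁻¹ * x) • (x₀ : A) = x₀
            rw [mul_smul, he, inv_smul_smul]
          · exact P.mul_mem (P.inv_mem (hT.mem_of_mem hx')) (hT.mem_of_mem hx)
        exact hT.unique' (hT.mem_of_mem hx) hx hx'
          (by rw [inv_mul_cancel]; exact H'.one_mem) hmem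
      have hsum : ∀ z : s, b.repr t z = ∑ x ∈ T, if x • (x₀ : A) = (z : A) then c₀ else 0 := by
        intro z
        have h1 : b.repr (∑ x ∈ T, x • (c₀ • (x₀ : A))) z
            = ∑ x ∈ T, b.repr (x • (c₀ • (x₀ : A))) z := by
          rw [map_sum]; exact Finsupp.finset_sum_apply _ _ _
        rw [htdef, h1]
        exact Finset.sum_congr rfl fun x hx => hterm z x hx
      obtain ⟨e, ⟨heT, heH⟩, -⟩ := hT.2 1 P.one_mem
      have heH' : e ∈ H' := by
        have h1 : e⁻¹ ∈ H' := by simpa using heH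
        simpa using H'.inv_mem h1
      have heFix : e • (x₀ : A) = x₀ := heH'.1
      have ht1 : b.repr t x₀ = c₀ := by
        rw [hsum x₀, Finset.sum_eq_single_of_mem e heT ?_, if_pos heFix]
        intro x hx hne
        rw [if_neg]
        intro hEq
        exact hne (huniq x hx e heT (hEq.trans heFix.symm))
      have ht2 : ∀ z : s, b.repr t z ≠ 0 →
          b.repr t z = c₀ ∧ b.repr a z = c₀ ∧ ∃ x ∈ T, x • (x₀ : A) = (z : A) := by
        intro z hz
        rw [hsum z] at hz
        obtain ⟨x, hx, hxne⟩ := Finset.exists_ne_zero_of_sum_ne_zero hz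
        have hxeq : x • (x₀ : A) = (z : A) := by
          by_contra hcon
          exact hxne (if_neg hcon)
        refine ⟨?_, ?_, x, hx, hxeq⟩
        · rw [hsum z, Finset.sum_eq_single_of_mem x hx ?_, if_pos hxeq]
          intro x' hx' hne
          rw [if_neg]
          intro hEq
          exact hne (huniq x' hx' x hx (hEq.trans hxeq.symm))
        · have hxz : (⟨x⁻¹ • (z : A), hstab x⁻¹ z z.2⟩ : s) = x₀ := by
            apply Subtype.ext
            show x⁻¹ • (z : A) = (x₀ : A)
            rw [← hxeq, inv_smul_smul]
          have hfa : x • a = a := hfix x (hT.mem_of_mem hx)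
          calc b.repr a z = b.repr (x • a) z := by rw [hfa]
            _ = b.repr a ⟨x⁻¹ • (z : A), hstab x⁻¹ z z.2⟩ := repr_smul_apply hstab b hb x a z
            _ = b.repr a x₀ := by rw [hxz]
            _ = c₀ := rfl
      have ht3 : ∀ z : s, (∀ g ∈ P, g • (z : A) = z) → b.repr t z = 0 := by
        intro z hzf
        by_contra hne
        obtain ⟨-, -, x, hx, hxeq⟩ := ht2 z hne
        apply hx₀nf
        intro g hg
        have hxP : x ∈ P := hT.mem_of_mem hx
        have h1 : (x * g * x⁻¹) ∈ P := P.mul_mem (P.mul_mem hxP hg) (P.inv_mem hxP)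
        have hx₀z : (x₀ : A) = x⁻¹ • (z : A) := by rw [← hxeq, inv_smul_smul]
        rw [hx₀z, ← mul_smul]
        have h2 : g * x⁻¹ = x⁻¹ * (x * g * x⁻¹) := by group
        rw [h2, mul_smul, hzf _ h1]
      have htf : t ∈ fixedSubring A P := trSet_mem_fixed htTr
      have hat_fix : a - t ∈ fixedSubring A P := sub_mem hfix htf
      have hat_v : ∀ z : s, (∀ g ∈ P, g • (z : A) = z) → b.repr (a - t) z = 0 := by
        intro z hzf
        rw [map_sub, Finsupp.sub_apply, hv z hzf, ht3 z hzf, sub_zero]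
      have hat_supp : (b.repr (a - t)).support ⊆ (b.repr a).support.erase x₀ := by
        intro z hzmem
        have hzne : b.repr (a - t) z ≠ 0 := Finsupp.mem_support_iff.mp hzmem
        rw [map_sub, Finsupp.sub_apply] at hzne
        by_cases hz0 : b.repr t z = 0
        · refine Finset.mem_erase.mpr ⟨?_, ?_⟩
          · rintro rfl
            rw [ht1] at hz0
            exact hc₀ne hz0
          · rw [Finsupp.mem_support_iff]
            intro ha0
            exact hzne (by rw [ha0, hz0, sub_zero])
        · obtain ⟨htc, hac, -⟩ := ht2 z hz0
          exact absurd (by rw [htc, hac, sub_self]) hzne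
      have hcard' : (b.repr (a - t)).support.card ≤ n := by
        have h1 := Finset.card_le_card hat_supp
        rw [Finset.card_erase_of_mem hx₀] at h1
        omega
      have hmem := ih (a - t) hat_fix hat_v hcard'
      have hfin := add_mem hmem htK
      simpa using hfin
end Helpers3
/-- Transitivity of Brauer maps: for `Q ⊴ S`, the Brauer homomorphism
`Br_S : A^S → A(S)` factors as `Br_S = Br_S^{A(Q)} ∘ Br_Q` through a map
`β : A(Q)^S → A(S)` which is a ring map on `A(Q)^S`, surjective, and whose kernel on
`A(Q)^S` is `Σ_{R<S} (A(Q))_R^S`; i.e. it induces the canonical isomorphism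
`A(Q)(S) ≅ A(S)`. -/
theorem brauer_transitivity {p : ℕ} {k G A : Type*} [Fact p.Prime] [Field k]
    [CharP k p] [Group G] [Fintype G] [Ring A] [Algebra k A] [MulSemiringAction G A]
    [SMulCommClass G k A]
    (hA : IsPPermAlgebra (G := G) A k) (Q S : Subgroup G) (hQ : IsPGroup p Q) (hS : IsPGroup p S)
    (hQS : Q ≤ S) (hSnorm : S ≤ Subgroup.normalizer (Q : Set G)) :
    ∃ β : BrQuot A Q → BrQuot A S,
      (∀ a : A, a ∈ fixedSubring A S → β (brA A Q a) = brA A S a) ∧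
      (∀ x ∈ quotFixed A Q S, ∀ y ∈ quotFixed A Q S,
        β (x + y) = β x + β y ∧ β (x * y) = β x * β y) ∧
      β 0 = 0 ∧ β 1 = 1 ∧
      (∀ z : BrQuot A S, ∃ x ∈ quotFixed A Q S, β x = z) ∧
      (∀ x ∈ quotFixed A Q S, (β x = 0 ↔
        x ∈ AddSubgroup.closure {y : BrQuot A Q | ∃ R : Subgroup G, R < S ∧
          ∃ a ∈ trSet A R S, y = brA A Q a})) := by
  classical
  obtain ⟨s, hstab, hli, hspan⟩ := hA
  let b : Module.Basis s k A := Module.Basis.mk hli (by rw [Subtype.range_coe]; exact hspan.ge)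
  have hb : ∀ x : s, (b x : A) = x := fun x => Module.Basis.mk_apply hli _ x
  have hmono : ∀ x : A, x ∈ fixedSubring A S → x ∈ fixedSubring A Q :=
    fun x hx q hq => hx q (hQS hq)
  have hzfix : ∀ z : s, (∀ g ∈ S, g • (z : A) = z) → (∀ g ∈ Q, g • (z : A) = z) :=
    fun z hz g hg => hz g (hQS hg)
  have hconj : ∀ n, n ∈ S → ∀ g, g ∈ Q → n⁻¹ * g * n ∈ Q := by
    intro n hn g hg
    have h2 := (Subgroup.mem_normalizer_iff.mp ((Subgroup.normalizer (Q : Set G)).inv_mem (hSnorm hn))) g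
    simpa using h2.mp hg
  have hnorm : ∀ n, n ∈ S → ∀ z : s, (∀ g ∈ Q, g • (z : A) = z) →
      ∀ g ∈ Q, g • (n • (z : A)) = n • (z : A) := by
    intro n hn z hz g hg
    have h1 : n⁻¹ * g * n ∈ Q := hconj n hn g hg
    calc g • n • (z : A) = (g * n) • (z : A) := (mul_smul _ _ _).symm
      _ = (n * (n⁻¹ * g * n)) • (z : A) := by
          rw [show g * n = n * (n⁻¹ * g * n) from by group]
      _ = n • ((n⁻¹ * g * n) • (z : A)) := mul_smul _ _ _
      _ = n • (z : A) := by rw [hz _ h1]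
  have hsmul_fix : ∀ n, n ∈ S → ∀ c : A, c ∈ fixedSubring A Q →
      n • c ∈ fixedSubring A Q := by
    intro n hn c hc q hq
    have h1 := hconj n hn q hq
    calc q • n • c = (q * n) • c := (mul_smul _ _ _).symm
      _ = (n * (n⁻¹ * q * n)) • c := by
          rw [show q * n = n * (n⁻¹ * q * n) from by group]
      _ = n • ((n⁻¹ * q * n) • c) := mul_smul _ _ _
      _ = n • c := by rw [hc _ h1]
  have wd : ∀ a c : A, a ∈ fixedSubring A S → c ∈ fixedSubring A S →
      brA A Q a = brA A Q c → brA A S a = brA A S c := by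
    intro a c ha hc h
    rw [brA_eq_iff (hmono a ha) (hmono c hc)] at h
    rw [brA_eq_iff ha hc]
    exact mem_brKer_of_repr hstab b hb hS (sub_mem ha hc)
      (fun z hzS => brKer_repr_eq_zero hstab b hb hQ h (hzfix z hzS))
  have hqf : ∀ a : A, a ∈ fixedSubring A S → brA A Q a ∈ quotFixed A Q S := by
    intro a ha n hn c hc hcx
    have hnc : n • c ∈ fixedSubring A Q := hsmul_fix n hn c hc
    have hdiff : c - a ∈ brKer A Q := by
      rw [← brA_eq_iff hc (hmono a ha)]; exact hcx
    have hna : n • a = a := ha n hn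
    have h2 : n • (c - a) = n • c - a := by rw [smul_sub, hna]
    have hdiff2 : n • c - a ∈ brKer A Q := by
      rw [← h2]
      refine mem_brKer_of_repr hstab b hb hQ ?_ ?_
      · rw [h2]; exact sub_mem hnc (hmono a ha)
      · intro z hz
        rw [repr_smul_apply hstab b hb]
        refine brKer_repr_eq_zero hstab b hb hQ hdiff ?_
        intro g hg
        have h3 : g • (n⁻¹ • (z : A)) = n⁻¹ • (z : A) :=
          hnorm n⁻¹ (S.inv_mem hn) ⟨(z : A), z.2⟩ hz g hg
        exact h3
    rw [brA_eq_iff hnc (hmono a ha)]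
    exact hdiff2
  have hlift : ∀ x, x ∈ quotFixed A Q S → ∃ a : A, a ∈ fixedSubring A S ∧ brA A Q a = x := by
    intro x hx
    obtain ⟨a₀, ha₀, ha₀x⟩ := brA_surjective (A := A) Q x
    set pQ : s → Prop := fun z => ∀ g ∈ Q, g • (z : A) = z with hpQ
    haveI : DecidablePred pQ := Classical.decPred _
    set a' : A := b.repr.symm (@Finsupp.filter s k _ pQ (Classical.decPred _) (b.repr a₀)) with ha'def
    have hra' : ∀ z : s, b.repr a' z = if pQ z then b.repr a₀ z else 0 := by
      intro z
      rw [ha'def, b.repr.apply_symm_apply, Finsupp.filter_apply]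
      congr
    have ha'Q : a' ∈ fixedSubring A Q := by
      intro g hg
      apply b.repr.injective
      ext z
      rw [repr_smul_apply hstab b hb, hra', hra']
      by_cases hzf : pQ z
      · have h1 : pQ ⟨g⁻¹ • (z : A), hstab g⁻¹ z z.2⟩ := by
          have hval : g⁻¹ • (z : A) = (z : A) := hzf g⁻¹ (Q.inv_mem hg)
          intro q hq
          show q • (g⁻¹ • (z : A)) = g⁻¹ • (z : A)
          rw [hval]
          exact hzf q hq
        rw [if_pos hzf, if_pos h1]
        congr 1
        exact Subtype.ext (hzf g⁻¹ (Q.inv_mem hg))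
      · have h1 : ¬ pQ (⟨g⁻¹ • (z : A), hstab g⁻¹ z z.2⟩ : s) := by
          intro hcon
          apply hzf
          have hcon' : ∀ q ∈ Q, q • (g⁻¹ • (z : A)) = g⁻¹ • (z : A) := hcon
          have hval : (z : A) = g⁻¹ • (z : A) := by
            rw [← hcon' g hg, smul_inv_smul]
          intro q hq
          calc q • (z : A) = q • (g⁻¹ • (z : A)) := by rw [← hval]
            _ = g⁻¹ • (z : A) := hcon' q hq
            _ = (z : A) := hval.symm
        rw [if_neg hzf, if_neg h1]
    have ha'x : brA A Q a' = x := by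
      rw [← ha₀x, brA_eq_iff ha'Q ha₀]
      refine mem_brKer_of_repr hstab b hb hQ (sub_mem ha'Q ha₀) ?_
      intro z hz
      rw [map_sub, Finsupp.sub_apply, hra', if_pos hz, sub_self]
    have ha'S : a' ∈ fixedSubring A S := by
      intro n hn
      have hquot : brA A Q (n • a') = x := hx n hn a' ha'Q ha'x
      have hna'Q : n • a' ∈ fixedSubring A Q := hsmul_fix n hn a' ha'Q
      have hker : n • a' - a' ∈ brKer A Q := by
        rw [← brA_eq_iff hna'Q ha'Q, hquot, ha'x]
      apply b.repr.injective
      ext z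
      by_cases hzf : pQ z
      · have h0 := brKer_repr_eq_zero hstab b hb hQ hker hzf
        rw [map_sub, Finsupp.sub_apply] at h0
        exact sub_eq_zero.mp h0
      · have hnf : ¬ pQ (⟨n⁻¹ • (z : A), hstab n⁻¹ z z.2⟩ : s) := by
          intro hcon
          apply hzf
          have hcon' : ∀ g ∈ Q, g • (n⁻¹ • (z : A)) = n⁻¹ • (z : A) := hcon
          intro g hg
          have h2 : g • (n • (n⁻¹ • (z : A))) = n • (n⁻¹ • (z : A)) :=
            hnorm n hn ⟨n⁻¹ • (z : A), hstab n⁻¹ z z.2⟩ hcon' g hg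
          rwa [smul_inv_smul] at h2
        rw [repr_smul_apply hstab b hb, hra', hra', if_neg hzf, if_neg hnf]
    exact ⟨a', ha'S, ha'x⟩
  set β : BrQuot A Q → BrQuot A S := fun x =>
    if h : ∃ a : A, a ∈ fixedSubring A S ∧ brA A Q a = x then brA A S (Classical.choose h)
    else 0 with hβ
  have hβ1 : ∀ a : A, a ∈ fixedSubring A S → β (brA A Q a) = brA A S a := by
    intro a ha
    have hex : ∃ c : A, c ∈ fixedSubring A S ∧ brA A Q c = brA A Q a := ⟨a, ha, rfl⟩
    simp only [hβ]
    rw [dif_pos hex]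
    obtain ⟨hc1, hc2⟩ := Classical.choose_spec hex
    exact wd _ _ hc1 ha hc2
  have hgen : ∀ a : A, a ∈ brKer A S → a ∈ fixedSubring A Q ∧ brA A Q a ∈
      AddSubgroup.closure
        {y : BrQuot A Q | ∃ R : Subgroup G, R < S ∧ ∃ c ∈ trSet A R S, y = brA A Q c} := by
    intro a ha
    induction ha using AddSubgroup.closure_induction with
    | mem t ht =>
        obtain ⟨R, hR, htr⟩ := ht
        exact ⟨hmono t (trSet_mem_fixed htr),
          AddSubgroup.subset_closure ⟨R, hR, t, htr, rfl⟩⟩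
    | zero => exact ⟨zero_mem _, by rw [brA_zero]; exact zero_mem _⟩
    | add u v hu hv ihu ihv =>
        exact ⟨add_mem ihu.1 ihv.1,
          by rw [brA_add ihu.1 ihv.1]; exact add_mem ihu.2 ihv.2⟩
    | neg u hu ihu =>
        refine ⟨neg_mem ihu.1, ?_⟩
        have hneg : brA A Q (-u) = - brA A Q u := by
          rw [show (-u : A) = 0 - u from (zero_sub u).symm, brA_sub (zero_mem _) ihu.1,
            brA_zero, zero_sub]
        rw [hneg]
        exact neg_mem ihu.2
  have hgen2 : ∀ x : BrQuot A Q, x ∈ AddSubgroup.closure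
      {y : BrQuot A Q | ∃ R : Subgroup G, R < S ∧ ∃ c ∈ trSet A R S, y = brA A Q c} →
      ∃ c : A, c ∈ fixedSubring A S ∧ brA A Q c = x ∧ brA A S c = 0 := by
    intro x hxc
    induction hxc using AddSubgroup.closure_induction with
    | mem y hy =>
        obtain ⟨R, hR, c, hc, rfl⟩ := hy
        have hcS : c ∈ fixedSubring A S := trSet_mem_fixed hc
        refine ⟨c, hcS, rfl, ?_⟩
        rw [brA_eq_zero_iff hcS]
        exact AddSubgroup.subset_closure ⟨R, hR, hc⟩
    | zero => exact ⟨0, zero_mem _, brA_zero _, brA_zero _⟩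
    | add u v hu hv ihu ihv =>
        obtain ⟨c1, h1S, h1x, h1z⟩ := ihu
        obtain ⟨c2, h2S, h2x, h2z⟩ := ihv
        exact ⟨c1 + c2, add_mem h1S h2S,
          by rw [brA_add (hmono c1 h1S) (hmono c2 h2S), h1x, h2x],
          by rw [brA_add h1S h2S, h1z, h2z, add_zero]⟩
    | neg u hu ihu =>
        obtain ⟨c1, h1S, h1x, h1z⟩ := ihu
        refine ⟨-c1, neg_mem h1S, ?_, ?_⟩
        · rw [show (-c1 : A) = 0 - c1 from (zero_sub c1).symm,
            brA_sub (zero_mem _) (hmono c1 h1S), brA_zero, zero_sub, h1x]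
        · rw [show (-c1 : A) = 0 - c1 from (zero_sub c1).symm,
            brA_sub (zero_mem _) h1S, brA_zero, zero_sub, h1z, neg_zero]
  refine ⟨β, hβ1, ?_, ?_, ?_, ?_, ?_⟩
  · intro x hx y hy
    obtain ⟨a, haS, rfl⟩ := hlift x hx
    obtain ⟨c, hcS, rfl⟩ := hlift y hy
    constructor
    · rw [← brA_add (hmono a haS) (hmono c hcS), hβ1 a haS, hβ1 c hcS,
        hβ1 _ (add_mem haS hcS), brA_add haS hcS]
    · rw [← brA_mul (hmono a haS) (hmono c hcS), hβ1 a haS, hβ1 c hcS,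
        hβ1 _ (mul_mem haS hcS), brA_mul haS hcS]
  · rw [← brA_zero (A := A) Q, hβ1 0 (zero_mem _), brA_zero]
  · rw [← brA_one (A := A) Q, hβ1 1 (one_mem _), brA_one]
  · intro z
    obtain ⟨a, haS, rfl⟩ := brA_surjective (A := A) S z
    exact ⟨brA A Q a, hqf a haS, hβ1 a haS⟩
  · intro x hx
    constructor
    · intro hx0
      obtain ⟨a, haS, rfl⟩ := hlift x hx
      rw [hβ1 a haS, brA_eq_zero_iff haS] at hx0
      exact (hgen a hx0).2
    · intro hxc
      obtain ⟨c, hcS, hcx, hcz⟩ := hgen2 x hxc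
      rw [← hcx, hβ1 c hcS]
      exact hcz

end PPerm
end

section
/- Let A be a G-algebra, N ⊴ G, and f_Q an idempotent of A fixed by a p-subgroup P, with f_Q's stabilizer H in N_G(Q) and the conjugates of f_Q pairwise orthogonal. If l ∈ (f_Q A f_Q)^H is an idempotent not lying in Σ_{R < P} (f_Q A f_Q)_R^P, then Tr_H^{N_G(Q)}(l) does not lie in Σ_{R < P} A_R^P either; concretely, if Tr_H^{N_G(Q)}(l) ∈ Σ_{R<P} A_R^P and f_Q is P-fixed, then l = f_Q · Tr_H^{N_G(Q)}(l) · f_Q ∈ Σ_{R<P} (f_Q A f_Q)_R^P. -/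
namespace PPerm
open scoped Classical


variable {G : Type*} [Group G]

variable (A : Type*) [Ring A] [MulSemiringAction G A]

/-- With `H` the stabilizer of the idempotent `fQ` (conjugates pairwise orthogonal),
`P ≤ H`, and `l` an `H`-fixed idempotent of the corner `fQ A fQ`:
`fQ · Tr_H^G(l) · fQ = l`, hence if `Tr_H^G(l) ∈ Σ_{R<P} A_R^P` then
`l ∈ Σ_{R<P} (fQ A fQ)_R^P`, and consequently if `l` does not lie in the latter sum,
then `Tr_H^G(l)` does not lie in the former. -/
theorem trace_relative_projectivity {G A : Type*} [Group G] [Fintype G] [Ring A]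
    [MulSemiringAction G A]
    (H P : Subgroup G) (hPH : P ≤ H) (fQ l : A) (hfQ : IsIdempotentElem fQ)
    (hstab : ∀ h ∈ H, h • fQ = fQ)
    (horth : ∀ x y : G, x⁻¹ * y ∉ H → (x • fQ) * (y • fQ) = 0)
    (hl : l = fQ * l * fQ) (hlH : ∀ h ∈ H, h • l = l) (hlid : IsIdempotentElem l)
    (S : Finset G) (hS : IsTransversal H ⊤ S) :
    fQ * (∑ x ∈ S, x • l) * fQ = l ∧
    ((∑ x ∈ S, x • l) ∈
        AddSubgroup.closure {x : A | ∃ R : Subgroup G, R < P ∧ x ∈ trSet A R P} →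
      l ∈ AddSubgroup.closure {x : A | ∃ R : Subgroup G, R < P ∧
        x ∈ trSetIn A {a : A | a = fQ * a * fQ} R P}) ∧
    (l ∉ AddSubgroup.closure {x : A | ∃ R : Subgroup G, R < P ∧
        x ∈ trSetIn A {a : A | a = fQ * a * fQ} R P} →
      (∑ x ∈ S, x • l) ∉
        AddSubgroup.closure {x : A | ∃ R : Subgroup G, R < P ∧ x ∈ trSet A R P}) := by
  classical
  obtain ⟨-, hS2⟩ := hS
  obtain ⟨x0, ⟨hx0S, hx0H⟩, hx0uniq⟩ := hS2 1 (by trivial)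
  have hx0H' : x0 ∈ H := by rwa [mul_one, inv_mem_iff] at hx0H
  have key : fQ * (∑ x ∈ S, x • l) * fQ = l := by
    rw [Finset.mul_sum, Finset.sum_mul]
    rw [Finset.sum_eq_single_of_mem x0 hx0S ?side]
    · rw [hlH x0 hx0H', ← hl]
    case side =>
      intro x hxS hxne
      have hxH : x ∉ H := by
        intro hxH
        exact hxne (hx0uniq x ⟨hxS, by simpa using inv_mem hxH⟩)
      have h1 : fQ * (x • fQ) = 0 := by
        have := horth 1 x (by simpa using hxH)
        simpa using this
      have h2 : (x • fQ) * fQ = 0 := by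
        have := horth x 1 (by simpa using (fun h => hxH (by simpa using inv_mem h)))
        simpa using this
      have hxl : x • l = (x • fQ) * (x • l) * (x • fQ) := by
        conv_lhs => rw [hl]
        rw [smul_mul', smul_mul']
      have hre : fQ * (x • l) * fQ = (fQ * (x • fQ)) * (x • l) * ((x • fQ) * fQ) := by
        conv_lhs => rw [hxl]
        noncomm_ring
      rw [hre, h1, h2]
      simp
  have main : (∑ x ∈ S, x • l) ∈
      AddSubgroup.closure {x : A | ∃ R : Subgroup G, R < P ∧ x ∈ trSet A R P} →
      l ∈ AddSubgroup.closure {x : A | ∃ R : Subgroup G, R < P ∧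
        x ∈ trSetIn A {a : A | a = fQ * a * fQ} R P} := by
    intro hmem
    set φ : A →+ A := AddMonoidHom.mk' (fun a => fQ * a * fQ)
      (by intro a b; simp [mul_add, add_mul]) with hφ
    have hsub : {x : A | ∃ R : Subgroup G, R < P ∧ x ∈ trSet A R P} ⊆
        ((AddSubgroup.closure {x : A | ∃ R : Subgroup G, R < P ∧
          x ∈ trSetIn A {a : A | a = fQ * a * fQ} R P}).comap φ : Set A) := by
      rintro b ⟨R, hRP, a, S', -, ha, hTr, rfl⟩
      refine AddSubgroup.subset_closure ⟨R, hRP, fQ * a * fQ, S', ?_, ?_, hTr, ?_⟩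
      · show fQ * a * fQ = fQ * (fQ * a * fQ) * fQ
        have hre : fQ * (fQ * a * fQ) * fQ = (fQ * fQ) * a * (fQ * fQ) := by noncomm_ring
        rw [hre, hfQ.eq]
      · intro h hhR
        have hhH : h ∈ H := hPH (le_of_lt hRP hhR)
        rw [smul_mul', smul_mul', hstab h hhH, ha h hhR]
      · show fQ * (∑ x ∈ S', x • a) * fQ = ∑ x ∈ S', x • (fQ * a * fQ)
        rw [Finset.mul_sum, Finset.sum_mul]
        refine Finset.sum_congr rfl fun x hx => ?_
        have hxH : x ∈ H := hPH (hTr.1 hx)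
        rw [smul_mul', smul_mul', hstab x hxH]
    have hφT : φ (∑ x ∈ S, x • l) ∈ AddSubgroup.closure {x : A | ∃ R : Subgroup G, R < P ∧
        x ∈ trSetIn A {a : A | a = fQ * a * fQ} R P} :=
      (AddSubgroup.closure_le _).2 hsub hmem
    rwa [show φ (∑ x ∈ S, x • l) = l from key] at hφT
  exact ⟨key, main, fun hnot hmem => hnot (main hmem)⟩

end PPerm
end

section
/- Let j be a G-invariant primitive idempotent of C^N with defect group Q. A point α ⊆ A^G covers j (Definition: ∃ i ∈ α and a point ε ⊆ A^N of defect Q with ij = ji = i, if = fi = f, jf₁ = f₁j = f₁ for f, f₁ ∈ ε) if and only if there exists a point ε of N on the corner algebra jAj with defect group Q and a primitive idempotent i ∈ α with i ∈ (jAj)^G and if = fi = f for some f ∈ ε. -/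
namespace PPerm
open scoped Classical


variable {G : Type*} [Group G]

variable (A : Type*) [Ring A] [MulSemiringAction G A]

section Aux

variable {G : Type*} [Group G] {A : Type*} [Ring A] [MulSemiringAction G A]

lemma corner_left {j f : A} (hj : IsIdempotentElem j) (hf : f = j * f * j) :
    j * f = f := by
  conv_lhs => rw [hf, ← mul_assoc, ← mul_assoc, hj]
  exact hf.symm

lemma corner_right {j f : A} (hj : IsIdempotentElem j) (hf : f = j * f * j) :
    f * j = f := by
  conv_lhs => rw [hf, mul_assoc, hj]
  exact hf.symm

lemma trSetIn_mono {V W : Set A} (hVW : V ⊆ W) {H K : Subgroup G} {b : A}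
    (h : b ∈ trSetIn A V H K) : b ∈ trSetIn A W H K := by
  obtain ⟨a, S, haV, hfix, hS, hsum⟩ := h
  exact ⟨a, S, hVW haV, hfix, hS, hsum⟩

lemma trSetIn_corner {j f : A} (hj : IsIdempotentElem j) (hjG : ∀ g : G, g • j = j)
    (hf : f = j * f * j) {Q' K : Subgroup G} (h : f ∈ trSetIn A Set.univ Q' K) :
    f ∈ trSetIn A {a : A | a = j * a * j} Q' K := by
  obtain ⟨a, S, -, hfix, hS, hsum⟩ := h
  refine ⟨j * a * j, S, ?_, ?_, hS, ?_⟩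
  · show j * a * j = j * (j * a * j) * j
    rw [← mul_assoc, ← mul_assoc, hj, mul_assoc (j * a), hj]
  · intro h hh
    rw [smul_mul', smul_mul', hjG]
    rw [hfix h hh]
  · have hx : ∀ x : G, x • (j * a * j) = j * (x • a) * j := fun x => by
      rw [smul_mul', smul_mul', hjG]
    calc f = j * (∑ x ∈ S, x • a) * j := by rw [← hsum, ← hf]
    _ = ∑ x ∈ S, j * (x • a) * j := by rw [Finset.mul_sum, Finset.sum_mul]
    _ = ∑ x ∈ S, x • (j * a * j) := by
        exact Finset.sum_congr rfl fun x _ => (hx x).symm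

end Aux

/-- Equivalence of the two notions of covering: a point (represented by `i₀`) of `A^G`
covers the `G`-invariant primitive idempotent `j` of `C^N` (defect `Q`) iff there is a
point of `N` on the corner algebra `jAj` with defect group `Q` and a representative
`i ∈ (jAj)^G` of the point of `i₀` with `if = fi = f` for some `f` in that point. -/
theorem covering_iff_corner_covering {p : ℕ} {k G A : Type*} [Fact p.Prime] [Field k]
    [CharP k p] [Group G] [Fintype G] [Ring A] [Algebra k A] [MulSemiringAction G A]
    [SMulCommClass G k A]
    (N : Subgroup G) (hN : N.Normal)
    (C : Subalgebra k A) (hCst : ∀ g : G, ∀ c ∈ C, g • c ∈ C)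
    (hCsummand : ∃ D : Submodule k A, IsCompl (Subalgebra.toSubmodule C) D)
    (j : A) (hjC : j ∈ C) (hj : IsIdempotentElem j) (hjG : ∀ g : G, g • j = j)
    (hjprim : IsPrimIdemSet ((C : Set A) ∩ (fixedSubring A N : Set A)) j)
    (Q : Subgroup G) (hQ : IsDefectIn A (C : Set A) j Q N)
    (i₀ : A) (hi₀ : IsPrimIdemSet (fixedSubring A (⊤ : Subgroup G) : Set A) i₀) :
    (∃ i : A, IsConjBy A (fixedSubring A (⊤ : Subgroup G) : Set A) i₀ i ∧
      ∃ f f₁ : A, IsPrimIdemSet (fixedSubring A N : Set A) f ∧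
        IsPrimIdemSet (fixedSubring A N : Set A) f₁ ∧
        IsConjBy A (fixedSubring A N : Set A) f f₁ ∧ IsDefect A f Q N ∧
        (i * j = i ∧ j * i = i) ∧ (i * f = f ∧ f * i = f) ∧
        (j * f₁ = f₁ ∧ f₁ * j = f₁)) ↔
    (∃ i : A, IsConjBy A (fixedSubring A (⊤ : Subgroup G) : Set A) i₀ i ∧ i = j * i * j ∧
      ∃ f : A, IsPrimIdemSet ({a : A | a = j * a * j} ∩ (fixedSubring A N : Set A)) f ∧
        IsDefectIn A {a : A | a = j * a * j} f Q N ∧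
        i * f = f ∧ f * i = f) := by
  constructor
  · rintro ⟨i, hconj, f, f₁, hfprim, hf₁prim, hconjf, hdef, ⟨hij, hji⟩, ⟨hif, hfi⟩,
      hjf₁, hf₁j⟩
    have hjf : j * f = f := by rw [← hif, ← mul_assoc, hji]
    have hfj : f * j = f := by rw [← hfi, mul_assoc, hij]
    have hfc : f = j * f * j := by rw [hjf, hfj]
    have hic : i = j * i * j := by rw [hji, hij]
    refine ⟨i, hconj, hic, f, ?_, ?_, hif, hfi⟩
    · obtain ⟨hfmem, hfidem, hfne, hsplit⟩ := hfprim
      exact ⟨⟨hfc, hfmem⟩, hfidem, hfne, fun a b ha hb =>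
        hsplit a b ha.2 hb.2⟩
    · obtain ⟨hQN, hmem, hmin⟩ := hdef
      exact ⟨hQN, trSetIn_corner hj hjG hfc hmem,
        fun Q' hQ' hm => hmin Q' hQ' (trSetIn_mono (Set.subset_univ _) hm)⟩
  · rintro ⟨i, hconj, hic, f, hfprim, hdef, hif, hfi⟩
    have hji : j * i = i := corner_left hj hic
    have hij : i * j = i := corner_right hj hic
    have hfc : f = j * f * j := hfprim.1.1
    have hjf : j * f = f := corner_left hj hfc
    have hfj : f * j = f := corner_right hj hfc
    have hfull : IsPrimIdemSet (fixedSubring A N : Set A) f := by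
      obtain ⟨⟨hfc', hfmem⟩, hfidem, hfne, hsplit⟩ := hfprim
      refine ⟨hfmem, hfidem, hfne, ?_⟩
      intro a b ha hb hia hib hab hba hfab
      have haf : a * f = a := by rw [hfab, mul_add, hia, hab, add_zero]
      have hfa : f * a = a := by rw [hfab, add_mul, hia, hba, add_zero]
      have hja : j * a = a := by rw [← hfa, ← mul_assoc, hjf]
      have haj : a * j = a := by rw [← haf, mul_assoc, hfj]
      have hbf : b * f = b := by rw [hfab, mul_add, hib, hba, zero_add]
      have hfb : f * b = b := by rw [hfab, add_mul, hib, hab, zero_add]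
      have hjb : j * b = b := by rw [← hfb, ← mul_assoc, hjf]
      have hbj : b * j = b := by rw [← hbf, mul_assoc, hfj]
      exact hsplit a b ⟨show a = j * a * j by rw [hja, haj], ha⟩
        ⟨show b = j * b * j by rw [hjb, hbj], hb⟩
        hia hib hab hba hfab
    refine ⟨i, hconj, f, f, hfull, hfull,
      ⟨1, 1, one_mem _, one_mem _, one_mul 1, one_mul 1, by rw [one_mul, mul_one]⟩,
      ?_, ⟨hij, hji⟩, ⟨hif, hfi⟩, hjf, hfj⟩
    obtain ⟨hQN, hmem, hmin⟩ := hdef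
    exact ⟨hQN, trSetIn_mono (Set.subset_univ _) hmem,
      fun Q' hQ' hm => hmin Q' hQ' (trSetIn_corner hj hjG hfc hm)⟩

end PPerm
end
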